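/- For every y in the convex hull (over ℝ) of the feasible set F_P, S(y) > −∞; that is, the convex hull of the feasible set is contained in the Sion set S_P = {x ∈ ℂ^n | S(x) ≠ −∞}. -/

import Mathlib

open Matrix ComplexOrder

/-- Sum of matrices acting on a vector. -/
lemma sum_mulVec_aux {k : ℕ} {J : Type} [Fintype J]
    (M : J → Matrix (Fin k) (Fin k) ℂ) (d : Fin k → ℂ) :
    (∑ j, M j) *ᵥ d = ∑ j, M j *ᵥ d := by
  ext i
  simp only [Finset.sum_apply, Matrix.mulVec, dotProduct, Matrix.sum_apply, Finset.sum_mul]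
  rw [Finset.sum_comm]

/-- Dot product with a sum of vectors. -/
lemma dot_sum_aux {k : ℕ} {J : Type} [Fintype J]
    (u : Fin k → ℂ) (w : J → Fin k → ℂ) :
    u ⬝ᵥ ∑ j, w j = ∑ j, u ⬝ᵥ w j := by
  simp only [dotProduct, Finset.sum_apply, Finset.mul_sum]
  exact Finset.sum_comm

/-- Key algebraic identity for a (complex) quadratic function under convex combination. -/
lemma quad_identity {k : ℕ} (A : Matrix (Fin k) (Fin k) ℂ) (s : Fin k → ℂ) (c : ℝ)
    (a b : ℝ) (hab : a + b = 1) (x y : Fin k → ℂ) :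
    2 * (star s ⬝ᵥ (a • x + b • y)).re
        - (star (a • x + b • y) ⬝ᵥ A.mulVec (a • x + b • y)).re + c
      = a * (2 * (star s ⬝ᵥ x).re - (star x ⬝ᵥ A.mulVec x).re + c)
        + b * (2 * (star s ⬝ᵥ y).re - (star y ⬝ᵥ A.mulVec y).re + c)
        + a * b * (star (x - y) ⬝ᵥ A.mulVec (x - y)).re := by
  have hax : a • x = (a : ℂ) • x := by
    ext i; simp [Complex.real_smul]
  have hby : b • y = (b : ℂ) • y := by
    ext i; simp [Complex.real_smul]
  rw [hax, hby]
  have h1 : star s ⬝ᵥ ((a : ℂ) • x + (b : ℂ) • y)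
      = (a : ℂ) * (star s ⬝ᵥ x) + (b : ℂ) * (star s ⬝ᵥ y) := by
    simp [dotProduct_add, dotProduct_smul, smul_eq_mul]
  have h2 : star ((a : ℂ) • x + (b : ℂ) • y) ⬝ᵥ A.mulVec ((a : ℂ) • x + (b : ℂ) • y)
      = (a : ℂ) * (a : ℂ) * (star x ⬝ᵥ A.mulVec x)
        + (a : ℂ) * (b : ℂ) * (star x ⬝ᵥ A.mulVec y)
        + (a : ℂ) * (b : ℂ) * (star y ⬝ᵥ A.mulVec x)
        + (b : ℂ) * (b : ℂ) * (star y ⬝ᵥ A.mulVec y) := by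
    simp only [star_add, star_smul, Complex.star_def, Complex.conj_ofReal,
      Matrix.mulVec_add, Matrix.mulVec_smul, dotProduct_add, add_dotProduct,
      dotProduct_smul, smul_dotProduct, smul_eq_mul]
    ring
  have h3 : star (x - y) ⬝ᵥ A.mulVec (x - y)
      = (star x ⬝ᵥ A.mulVec x) - (star x ⬝ᵥ A.mulVec y)
        - (star y ⬝ᵥ A.mulVec x) + (star y ⬝ᵥ A.mulVec y) := by
    simp only [star_sub, Matrix.mulVec_sub, dotProduct_sub, sub_dotProduct]
    ring
  rw [h1, h2, h3]
  simp only [Complex.add_re, Complex.sub_re, ← Complex.ofReal_mul, Complex.re_ofReal_mul]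
  have hb : b = 1 - a := by linarith
  subst hb
  ring

/-- Corollary to Lemma 1. The convex hull of the feasible set is
contained in the Sion set: for every `y` in the convex hull of `F_P`, `S(y) > -∞`. -/
theorem convexHull_subset_sionSet
    (n : ℕ) (hn : 1 ≤ n) (J : Type) [Fintype J]
    (Ao : Matrix (Fin n) (Fin n) ℂ) (A : J → Matrix (Fin n) (Fin n) ℂ)
    (so : Fin n → ℂ) (s : J → Fin n → ℂ) (co : ℝ) (c : J → ℝ)
    (hAo : Ao.IsHermitian) (hA : ∀ j, (A j).IsHermitian)
    (fo : (Fin n → ℂ) → ℝ)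
    (hfo : ∀ x, fo x = 2 * (star so ⬝ᵥ x).re - (star x ⬝ᵥ Ao.mulVec x).re + co)
    (f : J → (Fin n → ℂ) → ℝ)
    (hf : ∀ j x, f j x = 2 * (star (s j) ⬝ᵥ x).re - (star x ⬝ᵥ (A j).mulVec x).re + c j)
    (L : (J → ℝ) → (Fin n → ℂ) → ℝ)
    (hL : ∀ φ x, L φ x = fo x + ∑ j, φ j * f j x)
    (Ψ : Set (J → ℝ))
    (hΨ : Ψ = {φ | (∀ j, 0 ≤ φ j) ∧ (Ao + ∑ j, φ j • A j).PosSemidef})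
    (hΨne : Ψ.Nonempty)
    (FP : Set (Fin n → ℂ))
    (hFP : FP = {x | ∀ j, 0 ≤ f j x})
    (y : Fin n → ℂ) (hy : y ∈ convexHull ℝ FP) :
    (⊥ : EReal) < ⨅ φ ∈ Ψ, (L φ y : EReal) := by
  -- concavity of the Lagrangian over Ψ
  have key : ∀ φ ∈ Ψ, ∀ a b : ℝ, 0 ≤ a → 0 ≤ b → a + b = 1 →
      ∀ x z : Fin n → ℂ, a * L φ x + b * L φ z ≤ L φ (a • x + b • z) := by
    intro φ hφ a b ha hb hab x z
    rw [hΨ] at hφ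
    obtain ⟨hφ0, hPSD⟩ := hφ
    set d := x - z with hd
    -- the quadratic-form correction term for the combined matrix
    have hsum : (star d ⬝ᵥ (Ao + ∑ j, φ j • A j).mulVec d).re
        = (star d ⬝ᵥ Ao.mulVec d).re + ∑ j, φ j * (star d ⬝ᵥ (A j).mulVec d).re := by
      rw [Matrix.add_mulVec, dotProduct_add, Complex.add_re, sum_mulVec_aux (fun j => φ j • A j)]
      congr 1
      rw [dot_sum_aux, Complex.re_sum]
      refine Finset.sum_congr rfl fun j _ => ?_
      rw [Matrix.smul_mulVec, dotProduct_smul]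
      simp [Complex.real_smul]
    have hnonneg : 0 ≤ (star d ⬝ᵥ (Ao + ∑ j, φ j • A j).mulVec d).re := by
      have := hPSD.dotProduct_mulVec_nonneg d
      exact (Complex.le_def.mp this).1
    -- expand L via the quadratic identity
    have hfo' := quad_identity Ao so co a b hab x z
    have hLcomb : L φ (a • x + b • z)
        = a * L φ x + b * L φ z
          + a * b * ((star d ⬝ᵥ Ao.mulVec d).re + ∑ j, φ j * (star d ⬝ᵥ (A j).mulVec d).re) := by
      rw [hL, hL, hL, hfo x, hfo z, hfo (a • x + b • z), hfo']
      have : ∀ j : J, f j (a • x + b • z)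
          = a * f j x + b * f j z + a * b * (star d ⬝ᵥ (A j).mulVec d).re := by
        intro j
        rw [hf j x, hf j z, hf j (a • x + b • z)]
        exact quad_identity (A j) (s j) (c j) a b hab x z
      simp only [this]
      have hsplit : ∑ j, φ j * (a * f j x + b * f j z + a * b * (star d ⬝ᵥ (A j).mulVec d).re)
          = a * ∑ j, φ j * f j x + b * ∑ j, φ j * f j z
            + a * b * ∑ j, φ j * (star d ⬝ᵥ (A j).mulVec d).re := by
        rw [Finset.mul_sum, Finset.mul_sum, Finset.mul_sum,
          ← Finset.sum_add_distrib, ← Finset.sum_add_distrib]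
        exact Finset.sum_congr rfl fun j _ => by ring
      rw [hsplit, ← hd]
      ring
    rw [hLcomb, ← hsum]
    nlinarith [mul_nonneg ha hb, mul_nonneg (mul_nonneg ha hb) hnonneg]
  -- the set of points with a uniform lower bound on the Lagrangian
  set T : Set (Fin n → ℂ) := {x | ∃ m : ℝ, ∀ φ ∈ Ψ, m ≤ L φ x} with hT
  have hFPsub : FP ⊆ T := by
    intro x hx
    rw [hFP] at hx
    refine ⟨fo x, fun φ hφ => ?_⟩
    rw [hΨ] at hφ
    rw [hL]
    have : (0:ℝ) ≤ ∑ j, φ j * f j x :=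
      Finset.sum_nonneg fun j _ => mul_nonneg (hφ.1 j) (hx j)
    linarith
  have hconv : Convex ℝ T := by
    intro x hx z hz a b ha hb hab
    obtain ⟨m1, hm1⟩ := hx
    obtain ⟨m2, hm2⟩ := hz
    refine ⟨a * m1 + b * m2, fun φ hφ => ?_⟩
    have h1 := key φ hφ a b ha hb hab x z
    have h2 : a * m1 ≤ a * L φ x := mul_le_mul_of_nonneg_left (hm1 φ hφ) ha
    have h3 : b * m2 ≤ b * L φ z := mul_le_mul_of_nonneg_left (hm2 φ hφ) hb
    linarith
  have hyT : y ∈ T := convexHull_min hFPsub hconv hy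
  obtain ⟨m, hm⟩ := hyT
  refine lt_of_lt_of_le (EReal.bot_lt_coe m) (le_iInf₂ fun φ hφ => ?_)
  exact_mod_cast hm φ hφ
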